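/- Let F : ℝ → ℝ be continuous with |F(s)| ~ |s|^κ as s → 0 for some κ > 2, and |F(s)| e^{-α s²} → 0 as |s| → ∞ for every α > 0. Then for any radially symmetric u ∈ H¹(ℝ²) and any 0 ≤ b ≤ κ/2 - 1, the function x ↦ |x|^b F(u(x)) belongs to L¹(ℝ²). -/

import Mathlib

open MeasureTheory Filter Set Metric
open scoped ENNReal

abbrev E2 := EuclideanSpace ℝ (Fin 2)




lemma aux_radial_lintegral (w : ℝ → ℝ≥0∞) (hw : Measurable w) :
    ∫⁻ x : E2, w ‖x‖ =
      (volume : Measure E2).toSphere univ * ∫⁻ r in Ioi (0:ℝ), ENNReal.ofReal r * w r := by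
  have hmeas0 : MeasurableSet ({(0:E2)}ᶜ) := (measurableSet_singleton _).compl
  have hwm : Measurable (fun p : sphere (0:E2) 1 × Ioi (0:ℝ) => w p.2.1) :=
    hw.comp (measurable_subtype_coe.comp measurable_snd)
  have hdim : Module.finrank ℝ E2 = 2 := finrank_euclideanSpace_fin
  calc ∫⁻ x : E2, w ‖x‖
      = ∫⁻ x in ({(0:E2)}ᶜ), w ‖x‖ := by rw [restrict_compl_singleton]
    _ = ∫⁻ x : ({(0:E2)}ᶜ : Set E2), w ‖x.1‖ ∂(Measure.comap Subtype.val volume) :=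
        (lintegral_subtype_comap hmeas0 (fun x => w ‖x‖)).symm
    _ = ∫⁻ x : ({(0:E2)}ᶜ : Set E2),
          (fun p : sphere (0:E2) 1 × Ioi (0:ℝ) => w p.2.1) ((homeomorphUnitSphereProd E2) x)
          ∂(Measure.comap Subtype.val volume) := by
        refine lintegral_congr fun x => ?_
        simp
    _ = ∫⁻ p : sphere (0:E2) 1 × Ioi (0:ℝ), w p.2.1
          ∂((volume : Measure E2).toSphere.prod
            (Measure.volumeIoiPow (Module.finrank ℝ E2 - 1))) :=
        (volume : Measure E2).measurePreserving_homeomorphUnitSphereProd.lintegral_comp hwm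
    _ = ∫⁻ p : sphere (0:E2) 1 × Ioi (0:ℝ), w p.2.1
          ∂((volume : Measure E2).toSphere.prod (Measure.volumeIoiPow 1)) := by
        rw [hdim]
    _ = ∫⁻ x : sphere (0:E2) 1, (∫⁻ y : Ioi (0:ℝ), w y.1 ∂(Measure.volumeIoiPow 1))
          ∂(volume : Measure E2).toSphere := by
        rw [MeasureTheory.lintegral_prod _ hwm.aemeasurable]
    _ = ∫⁻ _ : sphere (0:E2) 1, (∫⁻ r in Ioi (0:ℝ), ENNReal.ofReal r * w r)
          ∂(volume : Measure E2).toSphere := by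
        refine lintegral_congr fun x => ?_
        rw [Measure.volumeIoiPow]
        rw [lintegral_withDensity_eq_lintegral_mul _
          (by exact (measurable_subtype_coe.pow_const 1).ennreal_ofReal)
          ((by exact hw.comp measurable_subtype_coe : Measurable fun y : Ioi (0:ℝ) => w y.1))]
        rw [show ((fun r : Ioi (0:ℝ) => ENNReal.ofReal (r.1 ^ 1)) * fun y : Ioi (0:ℝ) => w y.1)
            = (fun a : Ioi (0:ℝ) => ENNReal.ofReal a.1 * w a.1) from funext fun a => by
          simp [pow_one]]
        exact lintegral_subtype_comap measurableSet_Ioi (fun r => ENNReal.ofReal r * w r)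
    _ = (volume : Measure E2).toSphere univ * ∫⁻ r in Ioi (0:ℝ), ENNReal.ofReal r * w r := by
        rw [lintegral_const, mul_comm]



lemma aux_radnorm (u : E2 → ℝ) (hdiff : Differentiable ℝ u)
    (hrad : ∀ x y : E2, ‖x‖ = ‖y‖ → u x = u y) :
    ∀ x y : E2, ‖x‖ = ‖y‖ → ‖fderiv ℝ u x‖ = ‖fderiv ℝ u y‖ := by
  intro x y hxy
  set A := Submodule.reflection (ℝ ∙ (x - y))ᗮ with hA
  have hAx : A x = y := Submodule.reflection_sub hxy
  have hcomp : (fun z => u (A z)) = u := funext fun z => hrad (A z) z (A.norm_map z)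
  have hfd : HasFDerivAt (fun z => u (A z))
      ((fderiv ℝ u y).comp A.toLinearIsometry.toContinuousLinearMap) x := by
    have h1 : HasFDerivAt (⇑A) (A.toLinearIsometry.toContinuousLinearMap) x := by
      have h0 := (A.toLinearIsometry.toContinuousLinearMap).hasFDerivAt (x := x)
      have he : ⇑(A.toLinearIsometry.toContinuousLinearMap) = ⇑A := by
        funext z; simp
      rwa [he] at h0
    have h2 : HasFDerivAt u (fderiv ℝ u y) (A x) := by
      rw [hAx]; exact (hdiff y).hasFDerivAt
    exact h2.comp x h1
  have heq : fderiv ℝ u x = (fderiv ℝ u y).comp A.toLinearIsometry.toContinuousLinearMap := by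
    have h3 := hfd.fderiv
    rwa [hcomp] at h3
  rw [heq]
  exact ContinuousLinearMap.opNorm_comp_linearIsometryEquiv _ A


lemma aux_F_small (κ : ℝ) (hκ : 2 < κ) (F : ℝ → ℝ) (hF : Continuous F)
    (h0 : Tendsto (fun s => |F s| / |s| ^ κ) (nhdsWithin 0 {(0 : ℝ)}ᶜ) (nhds 1)) :
    F 0 = 0 ∧ ∃ δ > (0:ℝ), ∀ s : ℝ, |s| < δ → |F s| ≤ 2 * |s| ^ κ := by
  have hκ0 : (0:ℝ) < κ := by linarith
  have habs : Tendsto (fun s : ℝ => |s| ^ κ) (nhdsWithin 0 {(0:ℝ)}ᶜ) (nhds 0) := by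
    have hc : ContinuousAt (fun s : ℝ => |s| ^ κ) 0 := by
      exact (Real.continuousAt_rpow_const _ κ (Or.inr hκ0.le)).comp continuous_abs.continuousAt
    have h00 : |(0:ℝ)| ^ κ = 0 := by
      rw [abs_zero, Real.zero_rpow (ne_of_gt hκ0)]
    have := hc.tendsto
    rw [h00] at this
    exact this.mono_left nhdsWithin_le_nhds
  have hF0 : F 0 = 0 := by
    have h2 : Tendsto (fun s => |F s|) (nhdsWithin 0 {(0:ℝ)}ᶜ) (nhds (1 * 0)) := by
      refine (h0.mul habs).congr' ?_
      filter_upwards [eventually_mem_nhdsWithin] with s hs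
      have hs0 : s ≠ 0 := hs
      have hpos : 0 < |s| ^ κ := Real.rpow_pos_of_pos (abs_pos.2 hs0) κ
      field_simp
    have h3 : Tendsto (fun s => |F s|) (nhdsWithin 0 {(0:ℝ)}ᶜ) (nhds (|F 0|)) :=
      ((hF.abs.tendsto 0)).mono_left nhdsWithin_le_nhds
    have := tendsto_nhds_unique h3 h2
    rw [one_mul] at this
    exact abs_eq_zero.1 this
  refine ⟨hF0, ?_⟩
  have hev : ∀ᶠ s in nhdsWithin 0 {(0:ℝ)}ᶜ, |F s| / |s| ^ κ < 2 :=
    h0.eventually (eventually_lt_nhds one_lt_two)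
  rw [eventually_nhdsWithin_iff, Metric.eventually_nhds_iff] at hev
  obtain ⟨δ, hδpos, hδ⟩ := hev
  refine ⟨δ, hδpos, fun s hs => ?_⟩
  by_cases hs0 : s = 0
  · simp [hs0, hF0, Real.zero_rpow (ne_of_gt hκ0)]
  · have hd : dist s 0 < δ := by rwa [Real.dist_eq, sub_zero]
    have h4 := hδ hd hs0
    have hpos : 0 < |s| ^ κ := Real.rpow_pos_of_pos (abs_pos.2 hs0) κ
    rw [div_lt_iff₀ hpos] at h4
    linarith


lemma aux_lim_zero {f : ℝ → ℝ} {a L : ℝ} (hf : IntegrableOn f (Ioi a) volume)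
    (h0 : ∀ r, 0 ≤ f r) (hL : Tendsto f atTop (nhds L)) : L = 0 := by
  by_contra hne
  have hL0 : 0 ≤ L := ge_of_tendsto hL (Eventually.of_forall h0)
  have hLpos : 0 < L := lt_of_le_of_ne hL0 (Ne.symm hne)
  have hev : ∀ᶠ s in atTop, L / 2 ≤ f s := hL.eventually (eventually_ge_nhds (by linarith))
  obtain ⟨M, hM⟩ := eventually_atTop.1 hev
  set M' := max M a with hM'
  have hsub : Ioi M' ⊆ Ioi a := Ioi_subset_Ioi (le_max_right _ _)
  have hint : IntegrableOn (fun _ : ℝ => L / 2) (Ioi M') volume := by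
    refine (hf.mono_set hsub).mono' aestronglyMeasurable_const ?_
    rw [ae_restrict_iff' measurableSet_Ioi]
    refine Eventually.of_forall fun r hr => ?_
    rw [Real.norm_eq_abs, abs_of_pos (by linarith)]
    exact hM r (le_of_lt (lt_of_le_of_lt (le_max_left _ _) hr))
  rw [integrableOn_const_iff] at hint
  rcases hint with h | h
  · simp at h; linarith
  · simp [Real.volume_Ioi] at h

lemma aux_strauss (g g' h : ℝ → ℝ) (hg : ∀ r, HasDerivAt g (g' r) r)
    (hg'le : ∀ r, |g' r| ≤ h r) (hh0 : ∀ r, 0 ≤ h r)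
    (hgm : Continuous g) (hg'm : Measurable g') (hhm : Measurable h)
    (hint : IntegrableOn (fun r => r * (g r ^ 2 + h r ^ 2)) (Ioi 0) volume) :
    ∀ r₀ > (0:ℝ), g r₀ ^ 2 ≤ (∫ r in Ioi (0:ℝ), r * (g r ^ 2 + h r ^ 2)) / r₀ := by
  set φ : ℝ → ℝ := fun r => g r ^ 2 + h r ^ 2 with hφ
  have φ0 : ∀ r, 0 ≤ φ r := fun r => by positivity
  set C : ℝ := ∫ r in Ioi (0:ℝ), r * φ r with hC
  have hC0 : 0 ≤ C := setIntegral_nonneg measurableSet_Ioi fun r hr =>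
    mul_nonneg (le_of_lt hr) (φ0 r)
  intro r₀ hr₀
  have φm : Measurable φ := (hgm.measurable.pow_const 2).add (hhm.pow_const 2)
  have h1 : IntegrableOn (fun r => (1/r₀) * (r * φ r)) (Ioi r₀) volume :=
    (hint.mono_set (Ioi_subset_Ioi hr₀.le)).const_mul _
  have hpt : ∀ r, r₀ < r → φ r ≤ 1/r₀ * (r * φ r) := by
    intro r hr
    rw [one_div, inv_mul_eq_div, le_div_iff₀ hr₀]
    nlinarith [φ0 r]
  have hφint : IntegrableOn φ (Ioi r₀) volume := by
    refine h1.mono' φm.aestronglyMeasurable ?_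
    rw [ae_restrict_iff' measurableSet_Ioi]
    refine Eventually.of_forall fun r hr => ?_
    rw [Real.norm_eq_abs, abs_of_nonneg (φ0 r)]
    exact hpt r hr
  set D : ℝ → ℝ := fun r => 2 * g r * g' r with hDdef
  have hD : ∀ r, HasDerivAt (fun t => g t ^ 2) (D r) r := by
    intro r
    have := (hg r).fun_pow 2
    simpa [hDdef] using this
  have hg'sq : ∀ r, g' r ^ 2 ≤ h r ^ 2 := by
    intro r
    nlinarith [abs_nonneg (g' r), sq_abs (g' r), hg'le r, hh0 r]
  have hDle : ∀ r, |D r| ≤ φ r := by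
    intro r
    rw [abs_le]
    simp only [hφ, hDdef]
    constructor <;> nlinarith [sq_nonneg (g r + g' r), sq_nonneg (g r - g' r), hg'sq r]
  have hDm : Measurable D := (hgm.measurable.const_mul 2).mul hg'm
  have hDint : IntegrableOn D (Ioi r₀) volume := by
    refine hφint.mono' hDm.aestronglyMeasurable ?_
    exact Eventually.of_forall fun r => by rw [Real.norm_eq_abs]; exact hDle r
  have hGint : IntegrableOn (fun r => g r ^ 2) (Ioi r₀) volume := by
    refine hφint.mono' ((hgm.pow 2).measurable).aestronglyMeasurable ?_
    refine Eventually.of_forall fun r => ?_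
    rw [Real.norm_eq_abs, abs_of_nonneg (sq_nonneg _)]
    simp only [hφ]
    nlinarith [sq_nonneg (h r)]
  have hftc : ∀ s, r₀ ≤ s → g s ^ 2 = g r₀ ^ 2 + ∫ t in r₀..s, D t := by
    intro s hs
    have hii : IntervalIntegrable D volume r₀ s := by
      rw [intervalIntegrable_iff]
      refine hDint.mono_set fun t ht => ?_
      rw [uIoc_of_le hs] at ht
      exact mem_Ioi.2 ht.1
    have := intervalIntegral.integral_eq_sub_of_hasDerivAt (fun t _ => hD t) hii
    linarith [this]
  set I : ℝ := ∫ t in Ioi r₀, D t with hI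
  have hItend : Tendsto (fun s => ∫ t in r₀..s, D t) atTop (nhds I) :=
    intervalIntegral_tendsto_integral_Ioi r₀ hDint tendsto_id
  have hGtend : Tendsto (fun s => g s ^ 2) atTop (nhds (g r₀ ^ 2 + I)) := by
    refine (tendsto_const_nhds.add hItend).congr' ?_
    filter_upwards [eventually_ge_atTop r₀] with s hs
    exact (hftc s hs).symm
  have hL0 : g r₀ ^ 2 + I = 0 := aux_lim_zero hGint (fun r => sq_nonneg _) hGtend
  have e1 : |I| ≤ ∫ t in Ioi r₀, |D t| := by
    simpa [Real.norm_eq_abs] using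
      norm_integral_le_integral_norm (μ := volume.restrict (Ioi r₀)) D
  have e2 : ∫ t in Ioi r₀, |D t| ≤ ∫ t in Ioi r₀, φ t :=
    setIntegral_mono_on hDint.abs hφint measurableSet_Ioi fun t _ => hDle t
  have e3 : ∫ t in Ioi r₀, φ t ≤ ∫ t in Ioi r₀, (1/r₀) * (t * φ t) :=
    setIntegral_mono_on hφint h1 measurableSet_Ioi fun t ht => hpt t ht
  have e4 : ∫ t in Ioi r₀, (1/r₀) * (t * φ t) = (1/r₀) * ∫ t in Ioi r₀, t * φ t :=
    integral_const_mul _ _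
  have e5 : ∫ t in Ioi r₀, t * φ t ≤ C := by
    refine setIntegral_mono_set hint ?_ ((Ioi_subset_Ioi hr₀.le).eventuallyLE)
    rw [EventuallyLE, ae_restrict_iff' measurableSet_Ioi]
    exact Eventually.of_forall fun r hr => mul_nonneg (le_of_lt hr) (φ0 r)
  calc g r₀ ^ 2 = -I := by linarith
    _ ≤ |I| := neg_le_abs I
    _ ≤ ∫ t in Ioi r₀, |D t| := e1
    _ ≤ ∫ t in Ioi r₀, φ t := e2
    _ ≤ ∫ t in Ioi r₀, (1/r₀) * (t * φ t) := e3
    _ = (1/r₀) * ∫ t in Ioi r₀, t * φ t := e4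
    _ ≤ (1/r₀) * C := mul_le_mul_of_nonneg_left e5 (by positivity)
    _ = C / r₀ := one_div_mul_eq_div _ _


open MeasureTheory Filter

set_option maxHeartbeats 1000000 in
theorem stmt_13 (κ : ℝ) (hκ : 2 < κ) (F : ℝ → ℝ) (hF : Continuous F)
    (h0 : Tendsto (fun s => |F s| / |s| ^ κ) (nhdsWithin 0 {(0 : ℝ)}ᶜ) (nhds 1))
    (hinf : ∀ α : ℝ, 0 < α →
      Tendsto (fun s => |F s| * Real.exp (-α * s ^ 2)) (cocompact ℝ) (nhds 0))
    (b : ℝ) (hb0 : 0 ≤ b) (hb : b ≤ κ / 2 - 1)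
    (u : EuclideanSpace ℝ (Fin 2) → ℝ)
    (hrad : ∀ x y, ‖x‖ = ‖y‖ → u x = u y)
    (hdiff : Differentiable ℝ u)
    (hu2 : MemLp u 2 volume)
    (hgrad : MemLp (fun x => ‖fderiv ℝ u x‖) 2 volume) :
    Integrable (fun x => ‖x‖ ^ b * F (u x)) volume := by
  obtain ⟨hF0, δ, hδpos, hFδ⟩ := aux_F_small κ hκ F hF h0
  have hucont : Continuous u := hdiff.continuous
  -- the one-dimensional profile
  set e₁ : E2 := EuclideanSpace.single (0 : Fin 2) (1:ℝ) with he₁def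
  have he₁ : ‖e₁‖ = 1 := by simp [he₁def]
  set g : ℝ → ℝ := fun r => u (r • e₁) with hgdef
  set g' : ℝ → ℝ := fun r => fderiv ℝ u (r • e₁) e₁ with hg'def
  set h : ℝ → ℝ := fun r => ‖fderiv ℝ u (r • e₁)‖ with hhdef
  have hsmnorm : ∀ r : ℝ, 0 ≤ r → ‖r • e₁‖ = r := by
    intro r hr
    rw [norm_smul, he₁, mul_one, Real.norm_eq_abs, abs_of_nonneg hr]
  have hradu : ∀ x : E2, u x = g (‖x‖) := by
    intro x
    exact hrad x (‖x‖ • e₁) (by rw [hsmnorm _ (norm_nonneg x)])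
  have hradh : ∀ x : E2, ‖fderiv ℝ u x‖ = h (‖x‖) := by
    intro x
    exact aux_radnorm u hdiff hrad x (‖x‖ • e₁) (by rw [hsmnorm _ (norm_nonneg x)])
  have hsm : Measurable fun r : ℝ => r • e₁ :=
    (continuous_id.smul continuous_const).measurable
  have hgc : Continuous g := hucont.comp (continuous_id.smul continuous_const)
  have hg'm : Measurable g' := (measurable_fderiv_apply_const ℝ u e₁).comp hsm
  have hhm : Measurable h := ((measurable_fderiv ℝ u).norm).comp hsm
  have hg : ∀ r, HasDerivAt g (g' r) r := by
    intro r
    have h1 : HasDerivAt (fun s : ℝ => s • e₁) e₁ r := by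
      simpa using (hasDerivAt_id r).smul_const e₁
    exact (hdiff (r • e₁)).hasFDerivAt.comp_hasDerivAt r h1
  have hg'le : ∀ r, |g' r| ≤ h r := by
    intro r
    have := (fderiv ℝ u (r • e₁)).le_opNorm e₁
    rw [he₁, mul_one] at this
    simpa [hg'def, hhdef, Real.norm_eq_abs] using this
  have hh0 : ∀ r, 0 ≤ h r := fun r => norm_nonneg _
  -- transfer of integrability to the radial profile
  set φ : ℝ → ℝ := fun r => g r ^ 2 + h r ^ 2 with hφdef
  have φ0 : ∀ r, 0 ≤ φ r := fun r => by positivity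
  have φm : Measurable φ := (hgc.measurable.pow_const 2).add (hhm.pow_const 2)
  have hΦint : Integrable (fun x : E2 => φ (‖x‖)) volume := by
    have h1 : Integrable (fun x : E2 => u x ^ 2 + ‖fderiv ℝ u x‖ ^ 2) volume :=
      hu2.integrable_sq.add hgrad.integrable_sq
    refine h1.congr (Eventually.of_forall fun x => ?_)
    simp only [hφdef, hradu x, hradh x]
  have hIrφ : IntegrableOn (fun r => r * (g r ^ 2 + h r ^ 2)) (Ioi 0) volume := by
    have hm1 : AEStronglyMeasurable (fun x : E2 => φ ‖x‖) volume :=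
      (φm.comp measurable_norm).aestronglyMeasurable
    have hne : ∫⁻ x : E2, ENNReal.ofReal (φ ‖x‖) ∂volume ≠ ⊤ := by
      rw [lintegral_ofReal_ne_top_iff_integrable hm1
        (Eventually.of_forall fun x => φ0 _)]
      exact hΦint
    rw [aux_radial_lintegral (fun r => ENNReal.ofReal (φ r)) φm.ennreal_ofReal] at hne
    have hS0 : (volume : Measure E2).toSphere univ ≠ 0 := by
      rw [Measure.toSphere_apply_univ]
      exact mul_ne_zero (by simp [finrank_euclideanSpace_fin]) (measure_ball_pos _ _ one_pos).ne'
    have hne2 : ∫⁻ r in Ioi (0:ℝ), ENNReal.ofReal r * ENNReal.ofReal (φ r) ≠ ⊤ := by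
      intro hcon
      rw [hcon, ENNReal.mul_top hS0] at hne
      exact hne rfl
    have heq : ∫⁻ r in Ioi (0:ℝ), ENNReal.ofReal r * ENNReal.ofReal (φ r)
        = ∫⁻ r in Ioi (0:ℝ), ENNReal.ofReal (r * φ r) := by
      refine setLIntegral_congr_fun measurableSet_Ioi (fun r hr => ?_)
      rw [ENNReal.ofReal_mul (le_of_lt hr)]
    rw [heq] at hne2
    have := (lintegral_ofReal_ne_top_iff_integrable
      (f := fun r => r * φ r) (μ := volume.restrict (Ioi 0))
      ((measurable_id.mul φm).aestronglyMeasurable) ?_).1 hne2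
    · exact this
    · rw [EventuallyLE, ae_restrict_iff' measurableSet_Ioi]
      exact Eventually.of_forall fun r hr => mul_nonneg (le_of_lt hr) (φ0 r)
  set C : ℝ := ∫ r in Ioi (0:ℝ), r * (g r ^ 2 + h r ^ 2) with hCdef
  have hC0 : 0 ≤ C := setIntegral_nonneg measurableSet_Ioi fun r hr =>
    mul_nonneg (le_of_lt hr) (by positivity)
  have key : ∀ r₀ > (0:ℝ), g r₀ ^ 2 ≤ C / r₀ :=
    aux_strauss g g' h hg hg'le hh0 hgc hg'm hhm hIrφ
  -- choice of the radius
  set R : ℝ := max 1 (C / (δ/2)^2) with hRdef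
  have hR1 : (1:ℝ) ≤ R := le_max_left _ _
  have hRC : C ≤ R * (δ/2)^2 := by
    have h1 : C / (δ/2)^2 ≤ R := le_max_right _ _
    rw [div_le_iff₀ (by positivity)] at h1
    linarith
  -- pointwise bound outside the ball
  set e : ℝ := κ - 2*b - 2 with hedef
  have he0 : 0 ≤ e := by rw [hedef]; linarith
  set K : ℝ := 2 * C ^ b * δ ^ e with hKdef
  have hout : ∀ x : E2, R < ‖x‖ → ‖(‖x‖) ^ b * F (u x)‖ ≤ K * u x ^ 2 := by
    intro x hx
    have hx0 : (0:ℝ) < ‖x‖ := lt_of_lt_of_le (by linarith) hx.le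
    have hu2x : u x ^ 2 * ‖x‖ ≤ C := by
      have h1 := key (‖x‖) hx0
      rw [← hradu x] at h1
      rw [← le_div_iff₀ hx0]
      exact h1
    have huxδ : |u x| < δ := by
      have h2 : u x ^ 2 * R ≤ C := by nlinarith [sq_nonneg (u x)]
      have h3 : u x ^ 2 ≤ (δ/2)^2 := by nlinarith
      nlinarith [abs_nonneg (u x), sq_abs (u x)]
    have hFb : |F (u x)| ≤ 2 * |u x| ^ κ := hFδ _ huxδ
    by_cases hux0 : u x = 0
    · rw [hux0, hF0, mul_zero, norm_zero]
      positivity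
    · have ha : (0:ℝ) < |u x| := abs_pos.2 hux0
      have h2r : |u x| ^ (2:ℝ) = u x ^ 2 := by
        rw [show (2:ℝ) = ((2:ℕ):ℝ) by norm_num, Real.rpow_natCast, sq_abs]
      have hexp : |u x| ^ κ = |u x| ^ (2*b) * (|u x| ^ e * |u x| ^ (2:ℝ)) := by
        rw [← Real.rpow_add ha, ← Real.rpow_add ha]
        congr 1
        rw [hedef]; ring
      have hb2 : (‖x‖ * (u x) ^ 2) ^ b = ‖x‖ ^ b * |u x| ^ (2*b) := by
        rw [Real.mul_rpow (norm_nonneg x) (sq_nonneg _), ← sq_abs,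
          ← Real.rpow_natCast |u x| 2, ← Real.rpow_mul (abs_nonneg _)]
        norm_num
      calc ‖(‖x‖) ^ b * F (u x)‖ = (‖x‖) ^ b * |F (u x)| := by
            rw [Real.norm_eq_abs, abs_mul, abs_of_nonneg (Real.rpow_nonneg (norm_nonneg x) b)]
        _ ≤ (‖x‖) ^ b * (2 * |u x| ^ κ) :=
            mul_le_mul_of_nonneg_left hFb (Real.rpow_nonneg (norm_nonneg x) b)
        _ = 2 * ((‖x‖ * u x ^ 2) ^ b * (|u x| ^ e * u x ^ 2)) := by
            rw [hexp, hb2, h2r]; ring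
        _ ≤ 2 * (C ^ b * (δ ^ e * u x ^ 2)) := by
            have hA : (‖x‖ * u x ^ 2) ^ b ≤ C ^ b :=
              Real.rpow_le_rpow (mul_nonneg (norm_nonneg x) (sq_nonneg _))
                (by linarith [hu2x, mul_comm (‖x‖) (u x ^ 2)]) hb0
            have hB : |u x| ^ e * u x ^ 2 ≤ δ ^ e * u x ^ 2 :=
              mul_le_mul_of_nonneg_right
                (Real.rpow_le_rpow (abs_nonneg _) huxδ.le he0) (sq_nonneg _)
            have hBnn : 0 ≤ |u x| ^ e * u x ^ 2 :=
              mul_nonneg (Real.rpow_nonneg (abs_nonneg _) e) (sq_nonneg _)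
            have hCnn : 0 ≤ C ^ b := Real.rpow_nonneg hC0 b
            exact mul_le_mul_of_nonneg_left (mul_le_mul hA hB hBnn hCnn) (by norm_num)
        _ = K * u x ^ 2 := by rw [hKdef]; ring
  -- assembling
  have hmeas : AEStronglyMeasurable (fun x : E2 => (‖x‖) ^ b * F (u x)) volume :=
    ((continuous_norm.rpow_const fun x => Or.inr hb0).mul (hF.comp hucont)).aestronglyMeasurable
  have hinner : IntegrableOn (fun x : E2 => (‖x‖) ^ b * F (u x)) (closedBall 0 R) volume :=
    ((continuous_norm.rpow_const fun x => Or.inr hb0).mul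
      (hF.comp hucont)).continuousOn.integrableOn_compact (isCompact_closedBall 0 R)
  have houter : IntegrableOn (fun x : E2 => (‖x‖) ^ b * F (u x)) (closedBall 0 R)ᶜ volume := by
    have hKint : Integrable (fun x : E2 => K * u x ^ 2) volume :=
      hu2.integrable_sq.const_mul K
    refine (hKint.integrableOn).mono' hmeas.restrict ?_
    rw [ae_restrict_iff' measurableSet_closedBall.compl]
    refine Eventually.of_forall fun x hx => ?_
    have hx' : R < ‖x‖ := by
      simp only [mem_compl_iff, mem_closedBall, dist_zero_right, not_le] at hx
      exact hx
    exact hout x hx'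
  have := hinner.union houter
  rw [union_compl_self] at this
  exact integrableOn_univ.mp this
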